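/- Let Λ be a finitely aligned rank-r graph and V a Λ-contraction on a complex Hilbert space H satisfying the Popescu condition. Suppose (K, ι, W) and (K', ι', W') are two minimal Toeplitz-Cuntz-Krieger dilations of V, i.e. ι : H → K and ι' : H → K' are linear isometries, W and W' are Toeplitz-Cuntz-Krieger Λ-families which are Λ-contractions on K and K' respectively, W_λ* ∘ ι = ι ∘ V_λ* and W'_λ* ∘ ι' = ι' ∘ V_λ* for all λ ∈ Λ, K is the closed linear span of {W_λ ι(ξ) : λ ∈ Λ, ξ ∈ H} and K' is the closed linear span of {W'_λ ι'(ξ) : λ ∈ Λ, ξ ∈ H}. Then there exists a unitary U : K → K' such that U ∘ ι = ι' and U ∘ W_λ = W'_λ ∘ U for every λ ∈ Λ. -/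

import Mathlib

open scoped ComplexOrder
open ContinuousLinearMap

set_option synthInstance.maxHeartbeats 1000000
set_option maxHeartbeats 1000000

noncomputable section

universe u

/-- A rank-`r` graph: a countable small category whose morphisms form `Λ`, objects being
identified with degree-zero morphisms, equipped with a degree functor into `ℕ^r`
satisfying the unique factorisation property. -/
structure KGraph (r : ℕ) where
  Λ : Type
  countable : Countable Λ
  src : Λ → Λ
  tgt : Λ → Λ
  deg : Λ → Fin r → ℕ
  comp : Λ → Λ → Λ
  deg_src : ∀ l, deg (src l) = 0
  deg_tgt : ∀ l, deg (tgt l) = 0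
  src_eq_self : ∀ l, deg l = 0 → src l = l
  tgt_eq_self : ∀ l, deg l = 0 → tgt l = l
  comp_src_self : ∀ l, comp l (src l) = l
  tgt_comp_self : ∀ l, comp (tgt l) l = l
  src_comp : ∀ l m, src l = tgt m → src (comp l m) = src m
  tgt_comp : ∀ l m, src l = tgt m → tgt (comp l m) = tgt l
  deg_comp : ∀ l m, src l = tgt m → deg (comp l m) = deg l + deg m
  comp_assoc : ∀ l m n, src l = tgt m → src m = tgt n →
    comp (comp l m) n = comp l (comp m n)
  factorisation : ∀ (l : Λ) (m n : Fin r → ℕ), deg l = m + n →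
    ∃! p : Λ × Λ, deg p.1 = m ∧ deg p.2 = n ∧ src p.1 = tgt p.2 ∧ comp p.1 p.2 = l

namespace KGraph

variable {r : ℕ} (K : KGraph r)

/-- `|λ|`, the total degree of a morphism. -/
def degSum (l : K.Λ) : ℕ := ∑ j, K.deg l j

/-- The vertices `Λ⁰`, i.e. the degree-zero morphisms. -/
def IsVertex (l : K.Λ) : Prop := K.deg l = 0

/-- The pairs `(α, β)` describing the elements `μα = νβ` of `MCE(μ, ν)`. -/
def MCEPair (μ ν : K.Λ) (p : K.Λ × K.Λ) : Prop :=
  K.src μ = K.tgt p.1 ∧ K.src ν = K.tgt p.2 ∧ K.comp μ p.1 = K.comp ν p.2 ∧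
    K.deg (K.comp μ p.1) = K.deg μ ⊔ K.deg ν

/-- `Λ` is finitely aligned. -/
def FinitelyAligned : Prop := ∀ μ ν : K.Λ, {p : K.Λ × K.Λ | K.MCEPair μ ν p}.Finite

/-- `Λ` is row-finite. -/
def RowFinite : Prop :=
  ∀ (n : Fin r → ℕ) (a : K.Λ), {l : K.Λ | K.deg l = n ∧ K.tgt l = a}.Finite

/-- `Λ` is a finite graph: each `Λ^n` is finite. -/
def FiniteGraph : Prop := ∀ n : Fin r → ℕ, {l : K.Λ | K.deg l = n}.Finite

/-- `Λ` has no sources. -/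
def NoSources : Prop :=
  ∀ a : K.Λ, K.IsVertex a → ∀ n : Fin r → ℕ, ∃ l, K.deg l = n ∧ K.tgt l = a

/-- `Λ` is cofinal. -/
def Cofinal : Prop := ∀ a : K.Λ, K.IsVertex a → ∃ l, K.deg l ≠ 0 ∧ K.tgt l = a

end KGraph

section Families

variable {r : ℕ} (K : KGraph r)
variable {H : Type u} [NormedAddCommGroup H] [InnerProductSpace ℂ H] [CompleteSpace H]

/-- A `Λ`-contraction on a Hilbert space `H`. -/
def IsLambdaContraction (V : K.Λ → H →L[ℂ] H) : Prop :=
  (∀ l m, K.src l ≠ K.tgt m → V l ∘L V m = 0) ∧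
  (∀ l m, K.src l = K.tgt m → V l ∘L V m = V (K.comp l m)) ∧
  (∀ (n : Fin r → ℕ) (F : Finset K.Λ), (∀ l ∈ F, K.deg l = n) →
    ((1 : H →L[ℂ] H) - ∑ l ∈ F, V l ∘L adjoint (V l)).IsPositive) ∧
  (∀ a, K.IsVertex a → IsSelfAdjoint (V a) ∧ V a ∘L V a = V a) ∧
  (∀ ξ : H, HasSum (fun a : {a : K.Λ // K.IsVertex a} => V a.1 ξ) ξ)

/-- A `Λ`-isometry on a Hilbert space `H`. -/
def IsLambdaIsometry (V : K.Λ → H →L[ℂ] H) : Prop :=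
  IsLambdaContraction K V ∧
  ∀ (n : Fin r → ℕ) (ξ : H),
    HasSum (fun l : {l : K.Λ // K.deg l = n} => V l.1 (adjoint (V l.1) ξ)) ξ

/-- `D` is the defect operator `Δ_s(V)` (a strong-operator-topology sum). -/
def IsDefectOperator (V : K.Λ → H →L[ℂ] H) (s : ℝ) (D : H →L[ℂ] H) : Prop :=
  ∀ ξ : H, HasSum
    (fun m : {m : K.Λ // K.deg m ≤ 1} =>
      (((-(s ^ 2)) ^ K.degSum m.1 : ℝ) : ℂ) • V m.1 (adjoint (V m.1) ξ)) (D ξ)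

/-- The Popescu condition for a `Λ`-contraction. -/
def PopescuCondition (V : K.Λ → H →L[ℂ] H) : Prop :=
  ∃ ρ ∈ Set.Ioo (0 : ℝ) 1, ∀ s ∈ Set.Ioo ρ 1,
    ∃ D : H →L[ℂ] H, IsDefectOperator K V s D ∧ D.IsPositive

/-- A Toeplitz-Cuntz-Krieger `Λ`-family. -/
def IsTCKFamily (W : K.Λ → H →L[ℂ] H) : Prop :=
  (∀ l, W l ∘L adjoint (W l) ∘L W l = W l) ∧
  (∀ a, K.IsVertex a → IsSelfAdjoint (W a) ∧ W a ∘L W a = W a) ∧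
  (∀ a b, K.IsVertex a → K.IsVertex b → a ≠ b → W a ∘L W b = 0) ∧
  (∀ l m, K.src l = K.tgt m → W l ∘L W m = W (K.comp l m)) ∧
  (∀ l, adjoint (W l) ∘L W l = W (K.src l)) ∧
  (∀ n : Fin r → ℕ, n ≠ 0 → ∀ a, K.IsVertex a → ∀ F : Finset K.Λ,
    (∀ l ∈ F, K.deg l = n ∧ K.tgt l = a) →
    (W a - ∑ l ∈ F, W l ∘L adjoint (W l)).IsPositive) ∧
  (∀ μ ν : K.Λ, ∀ ξ : H,
    HasSum (fun p : {p : K.Λ × K.Λ // K.MCEPair μ ν p} => W p.1.1 (adjoint (W p.1.2) ξ))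
      (adjoint (W μ) (W ν ξ)))

/-- A Cuntz-Pimsner `Λ`-family. -/
def IsCPFamily (W : K.Λ → H →L[ℂ] H) : Prop :=
  IsTCKFamily K W ∧
  ∀ n : Fin r → ℕ, n ≠ 0 → ∀ a, K.IsVertex a → ∀ ξ : H,
    HasSum (fun l : {l : K.Λ // K.deg l = n ∧ K.tgt l = a} => W l.1 (adjoint (W l.1) ξ))
      (W a ξ)

end Families

section Creation

variable {r : ℕ}

/-- The Fock space `ℓ²(Λ)` of a higher-rank graph. -/
abbrev FockSpace (K : KGraph r) : Type := lp (fun _ : K.Λ => ℂ) 2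

/-- `L` is the family of creation operators on `ℓ²(Λ)`:
`L_λ δ_μ = δ_{λμ}` if `s(λ) = r(μ)` and `L_λ δ_μ = 0` otherwise. -/
def IsCreationFamily (K : KGraph r) [DecidableEq K.Λ]
    (L : K.Λ → FockSpace K →L[ℂ] FockSpace K) : Prop :=
  ∀ l m : K.Λ,
    (K.src l = K.tgt m → L l (lp.single 2 m 1) = lp.single 2 (K.comp l m) 1) ∧
    (K.src l ≠ K.tgt m → L l (lp.single 2 m 1) = 0)

end Creation


open scoped InnerProductSpace in
/-- Auxiliary: if two families of vectors in Hilbert spaces have identical Gram matrices and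
the first family has dense span, there is an isometric continuous linear map sending one family
to the other. -/
lemma isometry_of_inner_eq
    {K₁ : Type u} [NormedAddCommGroup K₁] [InnerProductSpace ℂ K₁] [CompleteSpace K₁]
    {K₂ : Type u} [NormedAddCommGroup K₂] [InnerProductSpace ℂ K₂] [CompleteSpace K₂]
    {I : Type*} (g₁ : I → K₁) (g₂ : I → K₂)
    (hinner : ∀ i j, ⟪g₁ i, g₁ j⟫_ℂ = ⟪g₂ i, g₂ j⟫_ℂ)
    (hdense : Dense ((Submodule.span ℂ (Set.range g₁) : Submodule ℂ K₁) : Set K₁)) :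
    ∃ Φ : K₁ →L[ℂ] K₂, (∀ x, ‖Φ x‖ = ‖x‖) ∧ ∀ i, Φ (g₁ i) = g₂ i := by
  set T : Set (K₁ × K₂) := Set.range (fun i => (g₁ i, g₂ i)) with hT
  set G : Submodule ℂ (K₁ × K₂) := Submodule.span ℂ T with hGdef
  have hG : ∀ p ∈ G, ∀ q ∈ G, ⟪p.1, q.1⟫_ℂ = ⟪p.2, q.2⟫_ℂ := by
    have step1 : ∀ p ∈ T, ∀ q ∈ G, ⟪(p : K₁ × K₂).1, (q : K₁ × K₂).1⟫_ℂ = ⟪p.2, q.2⟫_ℂ := by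
      rintro p hp q hq
      induction hq using Submodule.span_induction with
      | mem x hx =>
        obtain ⟨i, rfl⟩ := hp
        obtain ⟨j, rfl⟩ := hx
        exact hinner i j
      | zero => simp
      | add x y hx hy ihx ihy => simp [inner_add_right, ihx, ihy]
      | smul a x hx ihx => simp [inner_smul_right, ihx]
    intro p hp q hq
    induction hp using Submodule.span_induction with
    | mem x hx => exact step1 x hx q hq
    | zero => simp
    | add x y hx hy ihx ihy => simp [inner_add_left, ihx, ihy]
    | smul a x hx ihx => simp [inner_smul_left, ihx]
  have hGnorm : ∀ p ∈ G, ‖(p : K₁ × K₂).1‖ = ‖p.2‖ := by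
    intro p hp
    have h := hG p hp p hp
    rw [@norm_eq_sqrt_re_inner ℂ, @norm_eq_sqrt_re_inner ℂ, h]
  -- the projection of the graph onto the first coordinate
  set f₁ : G →ₗ[ℂ] K₁ := (LinearMap.fst ℂ K₁ K₂).comp G.subtype with hf₁
  have hf₁app : ∀ g : G, f₁ g = (g : K₁ × K₂).1 := fun g => rfl
  have hinj : Function.Injective f₁ := by
    intro a b hab
    have hmem : ((a : K₁ × K₂) - (b : K₁ × K₂)) ∈ G := sub_mem a.2 b.2
    have h1 : ((a : K₁ × K₂) - (b : K₁ × K₂)).1 = 0 := by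
      have : (a : K₁ × K₂).1 = (b : K₁ × K₂).1 := hab
      simp [Prod.fst_sub, this]
    have h2 := hGnorm _ hmem
    rw [h1] at h2
    have h3 : ((a : K₁ × K₂) - (b : K₁ × K₂)).2 = 0 :=
      norm_eq_zero.mp (by simpa using h2.symm)
    have : (a : K₁ × K₂) = (b : K₁ × K₂) := by
      apply Prod.ext
      · simpa [sub_eq_zero] using h1
      · simpa [Prod.snd_sub, sub_eq_zero] using h3
    exact Subtype.ext this
  set N : Submodule ℂ K₁ := LinearMap.range f₁ with hN
  set e₁ : G ≃ₗ[ℂ] N := LinearEquiv.ofInjective f₁ hinj with he₁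
  have he₁coe : ∀ g : G, ((e₁ g : K₁)) = (g : K₁ × K₂).1 := fun g =>
    LinearEquiv.ofInjective_apply f₁ g
  have hsymm_fst : ∀ x : N, ((e₁.symm x : G) : K₁ × K₂).1 = (x : K₁) := by
    intro x
    have h := he₁coe (e₁.symm x)
    rw [e₁.apply_symm_apply] at h
    exact h.symm
  set U₀lin : N →ₗ[ℂ] K₂ :=
    (LinearMap.snd ℂ K₁ K₂).comp (G.subtype.comp e₁.symm.toLinearMap) with hU₀lin
  have hU₀app : ∀ x : N, U₀lin x = ((e₁.symm x : G) : K₁ × K₂).2 := fun x => rfl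
  have hU₀norm : ∀ x : N, ‖U₀lin x‖ = ‖x‖ := by
    intro x
    rw [hU₀app]
    have := hGnorm _ (e₁.symm x).2
    rw [hsymm_fst x] at this
    rw [← this]; rfl
  set U₀ : N →L[ℂ] K₂ :=
    LinearMap.mkContinuous U₀lin 1 (fun x => by rw [one_mul]; exact (hU₀norm x).le) with hU₀
  have hU₀app' : ∀ x : N, U₀ x = U₀lin x := fun x => rfl
  -- N coincides with the span of the range of g₁
  have hNspan : N = Submodule.span ℂ (Set.range g₁) := by
    have h1 : N = Submodule.map (LinearMap.fst ℂ K₁ K₂) G := by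
      rw [hN, hf₁, LinearMap.range_comp, Submodule.range_subtype]
    have h2 : Submodule.map (LinearMap.fst ℂ K₁ K₂) G
        = Submodule.span ℂ ((LinearMap.fst ℂ K₁ K₂) '' T) := by
      rw [hGdef, Submodule.map_span]
    have h3 : (LinearMap.fst ℂ K₁ K₂) '' T = Set.range g₁ := by
      ext x
      constructor
      · rintro ⟨p, ⟨i, rfl⟩, rfl⟩; exact ⟨i, rfl⟩
      · rintro ⟨i, rfl⟩; exact ⟨(g₁ i, g₂ i), ⟨i, rfl⟩, rfl⟩
    rw [h1, h2, h3]
  have hNdense : Dense (N : Set K₁) := by rw [hNspan]; exact hdense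
  have hdr : DenseRange (⇑N.subtypeL) := by
    have : Set.range (⇑N.subtypeL) = (N : Set K₁) := Subtype.range_coe
    rw [DenseRange, this]; exact hNdense
  have hui : IsUniformInducing (⇑N.subtypeL) :=
    N.subtypeₗᵢ.isometry.isUniformInducing
  set Φ : K₁ →L[ℂ] K₂ := U₀.extend N.subtypeL with hΦ
  have hΦN : ∀ x : N, Φ (x : K₁) = U₀ x := fun x =>
    ContinuousLinearMap.extend_eq (f := U₀) (e := N.subtypeL) hdr hui x
  have hgraph : ∀ p ∈ G, Φ (p : K₁ × K₂).1 = p.2 := by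
    intro p hp
    have hxmem : p.1 ∈ N := ⟨⟨p, hp⟩, rfl⟩
    have h1 : Φ p.1 = U₀ ⟨p.1, hxmem⟩ := hΦN ⟨p.1, hxmem⟩
    have h2 : e₁.symm ⟨p.1, hxmem⟩ = ⟨p, hp⟩ := by
      rw [LinearEquiv.symm_apply_eq]
      apply Subtype.ext
      rw [he₁coe]
    rw [h1, hU₀app', hU₀app, h2]
  refine ⟨Φ, ?_, ?_⟩
  · have hclosed : IsClosed {x : K₁ | ‖Φ x‖ = ‖x‖} :=
      isClosed_eq (Φ.continuous.norm) continuous_norm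
    have hsub : (N : Set K₁) ⊆ {x : K₁ | ‖Φ x‖ = ‖x‖} := by
      intro x hx
      have h1 : Φ x = U₀ ⟨x, hx⟩ := hΦN ⟨x, hx⟩
      have h2 : ‖U₀ (⟨x, hx⟩ : N)‖ = ‖(⟨x, hx⟩ : N)‖ := by
        rw [hU₀app']; exact hU₀norm _
      show ‖Φ x‖ = ‖x‖
      rw [h1, h2]; rfl
    intro x
    have hx : x ∈ closure (N : Set K₁) := hNdense x
    exact (hclosed.closure_subset_iff.mpr hsub) hx
  · intro i
    exact hgraph (g₁ i, g₂ i) (Submodule.subset_span ⟨i, rfl⟩)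

/-- Uniqueness up to unitary equivalence of the minimal
Toeplitz-Cuntz-Krieger dilation of a `Λ`-contraction satisfying the Popescu condition. -/
theorem minimal_TCK_dilation_unique
    {r : ℕ} (K : KGraph r) (hFA : K.FinitelyAligned)
    {H : Type u} [NormedAddCommGroup H] [InnerProductSpace ℂ H] [CompleteSpace H]
    (V : K.Λ → H →L[ℂ] H) (hV : IsLambdaContraction K V) (hP : PopescuCondition K V)
    {K₁ : Type u} [NormedAddCommGroup K₁] [InnerProductSpace ℂ K₁] [CompleteSpace K₁]
    {K₂ : Type u} [NormedAddCommGroup K₂] [InnerProductSpace ℂ K₂] [CompleteSpace K₂]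
    (ι₁ : H →ₗᵢ[ℂ] K₁) (W₁ : K.Λ → K₁ →L[ℂ] K₁)
    (ι₂ : H →ₗᵢ[ℂ] K₂) (W₂ : K.Λ → K₂ →L[ℂ] K₂)
    (h₁tck : IsTCKFamily K W₁) (h₁con : IsLambdaContraction K W₁)
    (h₁dil : ∀ (l : K.Λ) (ξ : H), adjoint (W₁ l) (ι₁ ξ) = ι₁ (adjoint (V l) ξ))
    (h₁min : Dense ((Submodule.span ℂ {x : K₁ | ∃ (l : K.Λ) (ξ : H), x = W₁ l (ι₁ ξ)} :
      Submodule ℂ K₁) : Set K₁))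
    (h₂tck : IsTCKFamily K W₂) (h₂con : IsLambdaContraction K W₂)
    (h₂dil : ∀ (l : K.Λ) (ξ : H), adjoint (W₂ l) (ι₂ ξ) = ι₂ (adjoint (V l) ξ))
    (h₂min : Dense ((Submodule.span ℂ {x : K₂ | ∃ (l : K.Λ) (ξ : H), x = W₂ l (ι₂ ξ)} :
      Submodule ℂ K₂) : Set K₂)) :
    ∃ U : K₁ ≃ₗᵢ[ℂ] K₂,
      (∀ ξ : H, U (ι₁ ξ) = ι₂ ξ) ∧ ∀ (l : K.Λ) (x : K₁), U (W₁ l x) = W₂ l (U x) := by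
    classical
  -- the inner products of the generating vectors agree on both dilations
  have h₁s := h₁tck.2.2.2.2.2.2
  have h₂s := h₂tck.2.2.2.2.2.2
  have key : ∀ (μ ν : K.Λ) (ξ η : H),
      (inner ℂ (W₁ μ (ι₁ ξ)) (W₁ ν (ι₁ η)) : ℂ) = inner ℂ (W₂ μ (ι₂ ξ)) (W₂ ν (ι₂ η)) := by
    intro μ ν ξ η
    -- side 1
    have s1 : HasSum (fun p : {p : K.Λ × K.Λ // K.MCEPair μ ν p} =>
        W₁ p.1.1 (ι₁ ((adjoint (V p.1.2)) η))) ((adjoint (W₁ μ)) (W₁ ν (ι₁ η))) := by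
      simpa only [h₁dil] using h₁s μ ν (ι₁ η)
    have s2 := s1.mapL (innerSL ℂ (ι₁ ξ))
    have hfun1 : (fun p : {p : K.Λ × K.Λ // K.MCEPair μ ν p} =>
        (innerSL ℂ (ι₁ ξ)) (W₁ p.1.1 (ι₁ ((adjoint (V p.1.2)) η))))
        = fun p => (inner ℂ ((adjoint (V p.1.1)) ξ) ((adjoint (V p.1.2)) η) : ℂ) := by
      funext p
      show (inner ℂ (ι₁ ξ) (W₁ p.1.1 (ι₁ ((adjoint (V p.1.2)) η))) : ℂ) = _
      rw [← ContinuousLinearMap.adjoint_inner_left, h₁dil, ι₁.inner_map_map]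
    have hval1 : ((innerSL ℂ (ι₁ ξ)) ((adjoint (W₁ μ)) (W₁ ν (ι₁ η))) : ℂ)
        = inner ℂ (W₁ μ (ι₁ ξ)) (W₁ ν (ι₁ η)) := by
      show (inner ℂ (ι₁ ξ) ((adjoint (W₁ μ)) (W₁ ν (ι₁ η))) : ℂ) = _
      rw [ContinuousLinearMap.adjoint_inner_right]
    rw [hfun1, hval1] at s2
    -- side 2
    have t1 : HasSum (fun p : {p : K.Λ × K.Λ // K.MCEPair μ ν p} =>
        W₂ p.1.1 (ι₂ ((adjoint (V p.1.2)) η))) ((adjoint (W₂ μ)) (W₂ ν (ι₂ η))) := by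
      simpa only [h₂dil] using h₂s μ ν (ι₂ η)
    have t2 := t1.mapL (innerSL ℂ (ι₂ ξ))
    have hfun2 : (fun p : {p : K.Λ × K.Λ // K.MCEPair μ ν p} =>
        (innerSL ℂ (ι₂ ξ)) (W₂ p.1.1 (ι₂ ((adjoint (V p.1.2)) η))))
        = fun p => (inner ℂ ((adjoint (V p.1.1)) ξ) ((adjoint (V p.1.2)) η) : ℂ) := by
      funext p
      show (inner ℂ (ι₂ ξ) (W₂ p.1.1 (ι₂ ((adjoint (V p.1.2)) η))) : ℂ) = _
      rw [← ContinuousLinearMap.adjoint_inner_left, h₂dil, ι₂.inner_map_map]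
    have hval2 : ((innerSL ℂ (ι₂ ξ)) ((adjoint (W₂ μ)) (W₂ ν (ι₂ η))) : ℂ)
        = inner ℂ (W₂ μ (ι₂ ξ)) (W₂ ν (ι₂ η)) := by
      show (inner ℂ (ι₂ ξ) ((adjoint (W₂ μ)) (W₂ ν (ι₂ η))) : ℂ) = _
      rw [ContinuousLinearMap.adjoint_inner_right]
    rw [hfun2, hval2] at t2
    exact s2.unique t2
  -- the generating sets as ranges
  have hr1 : Set.range (fun i : K.Λ × H => W₁ i.1 (ι₁ i.2))
      = {x : K₁ | ∃ (l : K.Λ) (ξ : H), x = W₁ l (ι₁ ξ)} := by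
    ext x
    constructor
    · rintro ⟨⟨l, ξ⟩, rfl⟩; exact ⟨l, ξ, rfl⟩
    · rintro ⟨l, ξ, rfl⟩; exact ⟨(l, ξ), rfl⟩
  have hr2 : Set.range (fun i : K.Λ × H => W₂ i.1 (ι₂ i.2))
      = {x : K₂ | ∃ (l : K.Λ) (ξ : H), x = W₂ l (ι₂ ξ)} := by
    ext x
    constructor
    · rintro ⟨⟨l, ξ⟩, rfl⟩; exact ⟨l, ξ, rfl⟩
    · rintro ⟨l, ξ, rfl⟩; exact ⟨(l, ξ), rfl⟩
  obtain ⟨Φ, hΦn, hΦg⟩ := isometry_of_inner_eq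
    (fun i : K.Λ × H => W₁ i.1 (ι₁ i.2)) (fun i : K.Λ × H => W₂ i.1 (ι₂ i.2))
    (fun i j => key i.1 j.1 i.2 j.2) (by rw [hr1]; exact h₁min)
  obtain ⟨Ψ, hΨn, hΨg⟩ := isometry_of_inner_eq
    (fun i : K.Λ × H => W₂ i.1 (ι₂ i.2)) (fun i : K.Λ × H => W₁ i.1 (ι₁ i.2))
    (fun i j => (key i.1 j.1 i.2 j.2).symm) (by rw [hr2]; exact h₂min)
  -- Φ and Ψ are mutually inverse
  have hΨΦ : Ψ.comp Φ = ContinuousLinearMap.id ℂ K₁ := by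
    apply ContinuousLinearMap.ext_on h₁min
    rintro x ⟨l, ξ, rfl⟩
    simp only [ContinuousLinearMap.comp_apply, ContinuousLinearMap.id_apply]
    rw [hΦg (l, ξ), hΨg (l, ξ)]
  have hΦΨ : Φ.comp Ψ = ContinuousLinearMap.id ℂ K₂ := by
    apply ContinuousLinearMap.ext_on h₂min
    rintro x ⟨l, ξ, rfl⟩
    simp only [ContinuousLinearMap.comp_apply, ContinuousLinearMap.id_apply]
    rw [hΨg (l, ξ), hΦg (l, ξ)]
  have hleft : Function.LeftInverse ⇑Ψ ⇑Φ := fun x => by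
    have := ContinuousLinearMap.ext_iff.mp hΨΦ x
    simpa using this
  have hright : Function.RightInverse ⇑Ψ ⇑Φ := fun x => by
    have := ContinuousLinearMap.ext_iff.mp hΦΨ x
    simpa using this
  set E : K₁ ≃L[ℂ] K₂ := ContinuousLinearEquiv.equivOfInverse Φ Ψ hleft hright with hE
  have hEapp : ∀ x : K₁, E x = Φ x := fun x => rfl
  refine ⟨⟨E.toLinearEquiv, fun x => hΦn x⟩, ?_, ?_⟩
  · intro ξ
    show Φ (ι₁ ξ) = ι₂ ξ
    have hs1 : HasSum (fun a : {a : K.Λ // K.IsVertex a} => Φ (W₁ a.1 (ι₁ ξ))) (Φ (ι₁ ξ)) :=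
      (h₁con.2.2.2.2 (ι₁ ξ)).mapL Φ
    have hfe : (fun a : {a : K.Λ // K.IsVertex a} => Φ (W₁ a.1 (ι₁ ξ)))
        = fun a => W₂ a.1 (ι₂ ξ) := funext fun a => hΦg (a.1, ξ)
    rw [hfe] at hs1
    exact hs1.unique (h₂con.2.2.2.2 (ι₂ ξ))
  · intro l x
    show Φ (W₁ l x) = W₂ l (Φ x)
    have hcomp : Φ.comp (W₁ l) = (W₂ l).comp Φ := by
      apply ContinuousLinearMap.ext_on h₁min
      rintro x ⟨m, ξ, rfl⟩
      simp only [ContinuousLinearMap.comp_apply]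
      by_cases h : K.src l = K.tgt m
      · have e1 := DFunLike.congr_fun (h₁con.2.1 l m h) (ι₁ ξ)
        have e2 := DFunLike.congr_fun (h₂con.2.1 l m h) (ι₂ ξ)
        simp only [ContinuousLinearMap.comp_apply] at e1 e2
        rw [e1, hΦg (K.comp l m, ξ), hΦg (m, ξ), e2]
      · have e1 := DFunLike.congr_fun (h₁con.1 l m h) (ι₁ ξ)
        have e2 := DFunLike.congr_fun (h₂con.1 l m h) (ι₂ ξ)
        simp only [ContinuousLinearMap.comp_apply, ContinuousLinearMap.zero_apply] at e1 e2
        rw [hΦg (m, ξ), e1, e2, map_zero]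
    have := ContinuousLinearMap.ext_iff.mp hcomp x
    simpa using this
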